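/- Let a : Fin n → ℝ be fixed, 1 < k ≤ n, n ≥ 2, and S a uniformly random k-element subset of Fin n. Let T = (1/k) Σ_{i∈S} a i and define the variance estimator V̂ = (1 − k/n) · Σ_{i∈S} (a i − T)² / ((k−1)·k). Then E[V̂] = Var(T). -/

import Mathlib

open Finset

/-- Expectation of a real-valued function of a uniformly random `k`-element subset of `Fin n`. -/
noncomputable def pexp (n k : ℕ) (f : Finset (Fin n) → ℝ) : ℝ :=
  (∑ S ∈ (univ : Finset (Fin n)).powersetCard k, f S) /
    (((univ : Finset (Fin n)).powersetCard k).card : ℝ)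

/-- Number of `k`-subsets of `s` containing a fixed subset `t`. -/
lemma card_filter_superset {α : Type*} [DecidableEq α] {s t : Finset α} {k : ℕ}
    (ht : t ⊆ s) (htk : t.card ≤ k) :
    (((s.powersetCard k)).filter fun S => t ⊆ S).card
      = (s.card - t.card).choose (k - t.card) := by
  rw [← card_sdiff_of_subset ht, ← card_powersetCard]
  refine card_nbij' (fun S => S \ t) (fun U => U ∪ t) ?_ ?_ ?_ ?_
  · intro S hS
    simp only [mem_coe, mem_filter, mem_powersetCard] at hS ⊢
    obtain ⟨⟨hSs, hSk⟩, htS⟩ := hS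
    exact ⟨sdiff_subset_sdiff hSs le_rfl, by rw [card_sdiff_of_subset htS, hSk]⟩
  · intro U hU
    simp only [mem_coe, mem_filter, mem_powersetCard] at hU ⊢
    obtain ⟨hUs, hUk⟩ := hU
    have hdisj : Disjoint U t := disjoint_of_subset_left hUs sdiff_disjoint
    refine ⟨⟨union_subset (hUs.trans sdiff_subset) ht, ?_⟩, subset_union_right⟩
    rw [card_union_of_disjoint hdisj, hUk]
    omega
  · intro S hS
    simp only [mem_coe, mem_filter, mem_powersetCard] at hS
    exact sdiff_union_of_subset hS.2
  · intro U hU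
    simp only [mem_coe, mem_powersetCard] at hU
    exact union_sdiff_cancel_right (disjoint_of_subset_left hU.1 sdiff_disjoint)

lemma count_one (n k : ℕ) (i : Fin n) :
    (((univ : Finset (Fin n)).powersetCard k).filter fun S => i ∈ S).card
      = (n - 1).choose (k - 1) ∨ k = 0 := by
  rcases Nat.eq_zero_or_pos k with hk | hk
  · exact Or.inr hk
  left
  have h := card_filter_superset (t := {i}) (s := (univ : Finset (Fin n)))
    (k := k) (by simp) (by rw [card_singleton]; exact hk)
  simpa [card_fin, singleton_subset_iff] using h

lemma count_one' {n k : ℕ} (hk : 1 ≤ k) (i : Fin n) :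
    (((univ : Finset (Fin n)).powersetCard k).filter fun S => i ∈ S).card
      = (n - 1).choose (k - 1) := by
  rcases count_one n k i with h | h
  · exact h
  · omega

lemma count_two {n k : ℕ} (hk : 2 ≤ k) {i j : Fin n} (hij : i ≠ j) :
    (((univ : Finset (Fin n)).powersetCard k).filter fun S => i ∈ S ∧ j ∈ S).card
      = (n - 2).choose (k - 2) := by
  have h := card_filter_superset (t := {i, j}) (s := (univ : Finset (Fin n)))
    (k := k) (by simp) (by rw [card_pair hij]; exact hk)
  have hiff : ∀ S : Finset (Fin n), ({i, j} ⊆ S) ↔ (i ∈ S ∧ j ∈ S) := by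
    intro S; simp [insert_subset_iff]
  simp only [hiff] at h
  simpa [card_fin, card_pair hij] using h

/-- First moment: sum over all `k`-subsets of the within-subset sum. -/
lemma sum_sum_eq {n k : ℕ} (hk : 1 ≤ k) (f : Fin n → ℝ) :
    ∑ S ∈ (univ : Finset (Fin n)).powersetCard k, ∑ i ∈ S, f i
      = ((n - 1).choose (k - 1) : ℝ) * ∑ i, f i := by
  have step : ∀ S ∈ (univ : Finset (Fin n)).powersetCard k,
      ∑ i ∈ S, f i = ∑ i : Fin n, if i ∈ S then f i else 0 := by
    intro S _
    rw [Finset.sum_ite_mem, univ_inter]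
  rw [Finset.sum_congr rfl step, Finset.sum_comm]
  rw [Finset.mul_sum]
  refine Finset.sum_congr rfl fun i _ => ?_
  rw [← Finset.sum_filter, Finset.sum_const, count_one' hk i]
  simp [mul_comm]

/-- Second moment: sum over all `k`-subsets of the square of the within-subset sum. -/
lemma sum_sq_eq {n k : ℕ} (hk : 2 ≤ k) (a : Fin n → ℝ) :
    ∑ S ∈ (univ : Finset (Fin n)).powersetCard k, (∑ i ∈ S, a i) ^ 2
      = (((n - 1).choose (k - 1) : ℝ) - ((n - 2).choose (k - 2) : ℝ)) * (∑ i, (a i) ^ 2)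
        + ((n - 2).choose (k - 2) : ℝ) * (∑ i, a i) ^ 2 := by
  classical
  have step : ∀ S ∈ (univ : Finset (Fin n)).powersetCard k,
      (∑ i ∈ S, a i) ^ 2
        = ∑ i : Fin n, ∑ j : Fin n, if i ∈ S ∧ j ∈ S then a i * a j else 0 := by
    intro S _
    have h1 : (∑ i ∈ S, a i) ^ 2 = ∑ i ∈ S, ∑ j ∈ S, a i * a j := by
      rw [sq, Finset.sum_mul_sum]
    rw [h1]
    have h2 : ∀ i : Fin n, (∑ j : Fin n, if i ∈ S ∧ j ∈ S then a i * a j else 0)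
        = if i ∈ S then ∑ j ∈ S, a i * a j else 0 := by
      intro i
      by_cases hi : i ∈ S
      · simp only [hi, true_and, if_true]
        rw [Finset.sum_ite_mem, univ_inter]
      · simp [hi]
    rw [Finset.sum_congr rfl fun i _ => h2 i, Finset.sum_ite_mem, univ_inter]
  rw [Finset.sum_congr rfl step, Finset.sum_comm]
  have hinner : ∀ i : Fin n,
      ∑ S ∈ (univ : Finset (Fin n)).powersetCard k,
          ∑ j : Fin n, (if i ∈ S ∧ j ∈ S then a i * a j else 0)
        = ∑ j : Fin n,
            (if i = j then ((n - 1).choose (k - 1) : ℝ) else ((n - 2).choose (k - 2) : ℝ))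
              * (a i * a j) := by
    intro i
    rw [Finset.sum_comm]
    refine Finset.sum_congr rfl fun j _ => ?_
    rw [← Finset.sum_filter, Finset.sum_const]
    by_cases hij : i = j
    · subst hij
      have : (((univ : Finset (Fin n)).powersetCard k).filter fun S => i ∈ S ∧ i ∈ S)
          = ((univ : Finset (Fin n)).powersetCard k).filter fun S => i ∈ S := by
        simp
      rw [this, count_one' (by omega) i]
      simp [mul_comm]
    · rw [count_two hk hij]
      simp [hij, mul_comm]
  rw [Finset.sum_congr rfl fun i _ => hinner i]
  have expand : ∀ i : Fin n,
      ∑ j : Fin n,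
          (if i = j then ((n - 1).choose (k - 1) : ℝ) else ((n - 2).choose (k - 2) : ℝ))
            * (a i * a j)
        = (((n - 1).choose (k - 1) : ℝ) - ((n - 2).choose (k - 2) : ℝ)) * (a i) ^ 2
          + ((n - 2).choose (k - 2) : ℝ) * (a i * ∑ j, a j) := by
    intro i
    have split : ∀ j : Fin n,
        (if i = j then ((n - 1).choose (k - 1) : ℝ) else ((n - 2).choose (k - 2) : ℝ))
            * (a i * a j)
          = (if i = j then
              (((n - 1).choose (k - 1) : ℝ) - ((n - 2).choose (k - 2) : ℝ)) * (a i * a j)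
              else 0)
            + ((n - 2).choose (k - 2) : ℝ) * (a i * a j) := by
      intro j
      by_cases hij : i = j
      · simp [hij]; ring
      · simp [hij]
    rw [Finset.sum_congr rfl fun j _ => split j, Finset.sum_add_distrib,
      Finset.sum_ite_eq (univ : Finset (Fin n)) i
        (fun j => (((n - 1).choose (k - 1) : ℝ) - ((n - 2).choose (k - 2) : ℝ)) * (a i * a j))]
    simp [Finset.mul_sum, sq]
  rw [Finset.sum_congr rfl fun i _ => expand i, Finset.sum_add_distrib, ← Finset.mul_sum,
    ← Finset.mul_sum, ← Finset.sum_mul, ← sq]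

/-- For `T = (1/k) Σ_{i∈S} a i` with `S` a uniformly random `k`-subset of
`Fin n` (`1 < k ≤ n`, `n ≥ 2`), the variance estimator
`V̂ = (1 − k/n) · Σ_{i∈S} (a i − T)² / ((k−1)·k)` is unbiased for `Var(T)`. -/
theorem variance_estimator_unbiased (n k : ℕ) (a : Fin n → ℝ)
    (hk1 : 1 < k) (hk : k ≤ n) (hn : 2 ≤ n) :
    pexp n k (fun S =>
        (1 - (k : ℝ) / (n : ℝ)) *
          (∑ i ∈ S, (a i - (1 / (k : ℝ)) * ∑ i' ∈ S, a i') ^ 2) /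
          (((k : ℝ) - 1) * (k : ℝ))) =
      pexp n k (fun S =>
        ((1 / (k : ℝ)) * ∑ i ∈ S, a i -
          pexp n k (fun S' => (1 / (k : ℝ)) * ∑ i ∈ S', a i)) ^ 2) := by
  classical
  have hk0 : (k : ℝ) ≠ 0 := by positivity
  have hn0 : (n : ℝ) ≠ 0 := by positivity
  have hk1R : (k : ℝ) - 1 ≠ 0 := by
    have : (1 : ℝ) < (k : ℝ) := by exact_mod_cast hk1
    linarith [this]
  have hn1R : (n : ℝ) - 1 ≠ 0 := by
    have : (1 : ℝ) < (n : ℝ) := by exact_mod_cast hn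
    linarith [this]
  set P := (univ : Finset (Fin n)).powersetCard k with hP
  have hPcard : P.card = n.choose k := by
    rw [hP, card_powersetCard, card_fin]
  set N : ℝ := (n.choose k : ℝ) with hNdef
  set c1 : ℝ := ((n - 1).choose (k - 1) : ℝ) with hc1def
  set c2 : ℝ := ((n - 2).choose (k - 2) : ℝ) with hc2def
  set A1 : ℝ := ∑ i, a i with hA1
  set A2 : ℝ := ∑ i, (a i) ^ 2 with hA2
  have hN0 : N ≠ 0 := by
    rw [hNdef]
    exact_mod_cast (Nat.choose_pos hk).ne'
  have hc10 : c1 ≠ 0 := by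
    rw [hc1def]
    exact_mod_cast (Nat.choose_pos (by omega : k - 1 ≤ n - 1)).ne'
  -- relation 1 : n * c1 = N * k
  have hR1 : (n : ℝ) * c1 = N * k := by
    have h := Nat.add_one_mul_choose_eq (n - 1) (k - 1)
    have h1 : n - 1 + 1 = n := by omega
    have h2 : k - 1 + 1 = k := by omega
    rw [h1, h2] at h
    rw [hNdef, hc1def]
    exact_mod_cast h
  -- relation 2 : (n-1) * c2 = c1 * (k-1)
  have hR2 : ((n : ℝ) - 1) * c2 = c1 * ((k : ℝ) - 1) := by
    have h := Nat.add_one_mul_choose_eq (n - 2) (k - 2)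
    have h1 : n - 2 + 1 = n - 1 := by omega
    have h2 : k - 2 + 1 = k - 1 := by omega
    rw [h1, h2] at h
    have hcast : ((n - 1 : ℕ) : ℝ) * c2 = c1 * ((k - 1 : ℕ) : ℝ) := by
      rw [hc1def, hc2def]; exact_mod_cast h
    have e1 : ((n - 1 : ℕ) : ℝ) = (n : ℝ) - 1 := by
      push_cast [Nat.cast_sub (by omega : 1 ≤ n)]; ring
    have e2 : ((k - 1 : ℕ) : ℝ) = (k : ℝ) - 1 := by
      push_cast [Nat.cast_sub (by omega : 1 ≤ k)]; ring
    rw [e1, e2] at hcast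
    exact hcast
  -- moment computations
  have hM1 : ∑ S ∈ P, (∑ i ∈ S, a i) = c1 * A1 := sum_sum_eq (by omega) a
  have hM3 : ∑ S ∈ P, (∑ i ∈ S, (a i) ^ 2) = c1 * A2 := sum_sum_eq (by omega) (fun i => (a i) ^ 2)
  have hM2 : ∑ S ∈ P, (∑ i ∈ S, a i) ^ 2 = (c1 - c2) * A2 + c2 * A1 ^ 2 := sum_sq_eq hk1 a
  -- per-S simplification of the estimator
  have perS : ∀ S ∈ P,
      (1 - (k : ℝ) / (n : ℝ)) *
          (∑ i ∈ S, (a i - (1 / (k : ℝ)) * ∑ i' ∈ S, a i') ^ 2) /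
          (((k : ℝ) - 1) * (k : ℝ))
        = (1 - (k : ℝ) / (n : ℝ)) / (((k : ℝ) - 1) * (k : ℝ)) *
            ((∑ i ∈ S, (a i) ^ 2) - (1 / (k : ℝ)) * (∑ i ∈ S, a i) ^ 2) := by
    intro S hS
    have hcard : (S.card : ℝ) = (k : ℝ) := by
      exact_mod_cast congrArg (Nat.cast (R := ℝ)) (mem_powersetCard.1 hS).2
    have hexp : ∑ i ∈ S, (a i - (1 / (k : ℝ)) * ∑ i' ∈ S, a i') ^ 2
        = (∑ i ∈ S, (a i) ^ 2) - 2 * ((1 / (k : ℝ)) * ∑ i' ∈ S, a i') * (∑ i ∈ S, a i)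
          + (S.card : ℝ) * ((1 / (k : ℝ)) * ∑ i' ∈ S, a i') ^ 2 := by
      rw [Finset.sum_congr rfl fun i _ => sub_sq (a i) ((1 / (k : ℝ)) * ∑ i' ∈ S, a i')]
      rw [Finset.sum_add_distrib, Finset.sum_sub_distrib, ← Finset.sum_mul, Finset.sum_const,
        nsmul_eq_mul, ← Finset.mul_sum]
      ring
    rw [hexp, hcard]
    field_simp
    ring
  -- expand both sides
  unfold pexp
  rw [← hP, hPcard, ← hNdef]
  rw [Finset.sum_congr rfl perS, ← Finset.mul_sum, Finset.sum_sub_distrib, ← Finset.mul_sum,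
    hM3, hM2]
  -- RHS inner expectation
  have sq_expand : ∀ S : Finset (Fin n),
      ((1 / (k : ℝ)) * ∑ i ∈ S, a i - (1 / (k : ℝ)) * (c1 * A1) / N) ^ 2
        = (1 / (k : ℝ)) ^ 2 * (∑ i ∈ S, a i) ^ 2
          - 2 * ((1 / (k : ℝ)) * (c1 * A1) / N) * ((1 / (k : ℝ)) * ∑ i ∈ S, a i)
          + ((1 / (k : ℝ)) * (c1 * A1) / N) ^ 2 := by
    intro S; ring
  have hInner : (∑ S ∈ P, (1 / (k : ℝ)) * ∑ i ∈ S, a i) / N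
      = (1 / (k : ℝ)) * (c1 * A1) / N := by
    rw [← Finset.mul_sum, hM1]
  rw [hInner]
  rw [Finset.sum_congr rfl fun S _ => sq_expand S]
  rw [Finset.sum_add_distrib, Finset.sum_sub_distrib, ← Finset.mul_sum, ← Finset.mul_sum,
    ← Finset.mul_sum, hM2, hM1, Finset.sum_const, nsmul_eq_mul, hPcard, ← hNdef]
  -- now pure algebra; eliminate N and c2
  have hNval : N = (n : ℝ) * c1 / (k : ℝ) := by
    field_simp
    linarith [hR1]
  have hc2val : c2 = c1 * ((k : ℝ) - 1) / ((n : ℝ) - 1) := by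
    field_simp
    linarith [hR2]
  rw [hNval, hc2val]
  field_simp
  ring
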